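/- Let f : ℝⁿ → ℝ be (2,L₁)-smooth and let δ > 0. Then for every x ∈ ℝⁿ, the gradient of f averaged over the ball of radius δ satisfies ‖ (1/(δⁿVₙ)) ∫_{δBⁿ} ∇f(x+u) du − ∇f(x) ‖ ≤ L₁ n δ/(n+1). -/

import Mathlib

open MeasureTheory

noncomputable section

/-- The uniform probability measure on the unit sphere `S^{n-1} ⊆ ℝⁿ`
(the normalized rotation-invariant surface measure), viewed as a measure on
the ambient Euclidean space. -/
def sphereUniform (n : ℕ) : Measure (EuclideanSpace ℝ (Fin n)) :=
  Measure.map Subtype.val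
    ((((volume : Measure (EuclideanSpace ℝ (Fin n))).toSphere) Set.univ)⁻¹ •
      (volume : Measure (EuclideanSpace ℝ (Fin n))).toSphere)

/-- `f : ℝⁿ → ℝ` is `(p, L)`-smooth: it is `p` times continuously differentiable and
`sup_{‖u‖=1} |(∂^{p-1}f(x) - ∂^{p-1}f(x'))[u,…,u]| ≤ L‖x - x'‖` for all `x, x'`. -/
def IsPLSmooth {n : ℕ} (p : ℕ) (L : ℝ) (f : EuclideanSpace ℝ (Fin n) → ℝ) : Prop :=
  ContDiff ℝ p f ∧
    ∀ x x' u : EuclideanSpace ℝ (Fin n), ‖u‖ = 1 →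
      |iteratedFDeriv ℝ (p - 1) f x (fun _ => u) - iteratedFDeriv ℝ (p - 1) f x' (fun _ => u)|
        ≤ L * ‖x - x'‖

/-- The stochastic zeroth-order gradient estimator
`∇̂f_k^δ(x) = (n/(2δk)) ∑ᵢ (f(x+δvᵢ) - f(x-δvᵢ)) vᵢ`. -/
def gradEst {n : ℕ} (k : ℕ) (δ : ℝ) (f : EuclideanSpace ℝ (Fin n) → ℝ)
    (vs : Fin k → EuclideanSpace ℝ (Fin n)) (x : EuclideanSpace ℝ (Fin n)) :
    EuclideanSpace ℝ (Fin n) :=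
  ((n : ℝ) / (2 * δ * k)) • ∑ i, (f (x + δ • vs i) - f (x - δ • vs i)) • vs i

/-- The stochastic zeroth-order Hessian estimator
`Ĥf_k^δ(x) = (n²/(8δ²k²)) ∑ᵢⱼ (f(x+δvᵢ+δwⱼ) - f(x-δvᵢ+δwⱼ) - f(x+δvᵢ-δwⱼ) + f(x-δvᵢ-δwⱼ))
  (vᵢwⱼᵀ + wⱼvᵢᵀ)`. -/
def hessEst {n : ℕ} (k : ℕ) (δ : ℝ) (f : EuclideanSpace ℝ (Fin n) → ℝ)
    (vs ws : Fin k → EuclideanSpace ℝ (Fin n)) (x : EuclideanSpace ℝ (Fin n)) :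
    Matrix (Fin n) (Fin n) ℝ :=
  ((n : ℝ) ^ 2 / (8 * δ ^ 2 * k ^ 2)) •
    ∑ i, ∑ j,
      (f (x + δ • vs i + δ • ws j) - f (x - δ • vs i + δ • ws j)
          - f (x + δ • vs i - δ • ws j) + f (x - δ • vs i - δ • ws j)) •
        (Matrix.vecMulVec (vs i) (ws j) + Matrix.vecMulVec (ws j) (vs i))

/-- The Hessian matrix `∇²f(x)` of `f` at `x`, with entries
`(∂²f(x))[eᵢ, eⱼ]` in the standard basis. -/
def hessMat {n : ℕ} (f : EuclideanSpace ℝ (Fin n) → ℝ)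
    (x : EuclideanSpace ℝ (Fin n)) : Matrix (Fin n) (Fin n) ℝ :=
  Matrix.of fun i j =>
    iteratedFDeriv ℝ 2 f x ![EuclideanSpace.single i 1, EuclideanSpace.single j 1]

/-- The spectral (operator) norm of an `n × n` real matrix. -/
def specNorm {n : ℕ} (M : Matrix (Fin n) (Fin n) ℝ) : ℝ :=
  ‖Matrix.toEuclideanCLM (𝕜 := ℝ) M‖

/-- The square of the Frobenius norm of a matrix. -/
def frobSq {n : ℕ} (M : Matrix (Fin n) (Fin n) ℝ) : ℝ :=
  ∑ i, ∑ j, (M i j) ^ 2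

/-- `Vₙ`, the Lebesgue volume of the closed unit ball in `ℝⁿ`. -/
def unitBallVol (n : ℕ) : ℝ :=
  (volume (Metric.closedBall (0 : EuclideanSpace ℝ (Fin n)) 1)).toReal

/-- `f^δ(x) = (1/(δⁿVₙ)) ∫_{δBⁿ} f(x+u) du`, the average of `f` over the ball
of radius `δ` centered at `x`. -/
def ballAvg {n : ℕ} (δ : ℝ) (f : EuclideanSpace ℝ (Fin n) → ℝ)
    (y : EuclideanSpace ℝ (Fin n)) : ℝ :=
  (δ ^ n * unitBallVol n)⁻¹ *
    ∫ u in Metric.closedBall (0 : EuclideanSpace ℝ (Fin n)) δ, f (y + u)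

/-- `f̃^δ(x) = (1/(δⁿVₙ))² ∫_{δBⁿ} ∫_{δBⁿ} f(x+u+u') du du'`, the double average of `f`
over two balls of radius `δ`. -/
def doubleBallAvg {n : ℕ} (δ : ℝ) (f : EuclideanSpace ℝ (Fin n) → ℝ)
    (y : EuclideanSpace ℝ (Fin n)) : ℝ :=
  ((δ ^ n * unitBallVol n)⁻¹) ^ 2 *
    ∫ u in Metric.closedBall (0 : EuclideanSpace ℝ (Fin n)) δ,
      ∫ u' in Metric.closedBall (0 : EuclideanSpace ℝ (Fin n)) δ, f (y + u + u')

end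


namespace BallAvgAux

open MeasureTheory Metric

theorem grad_lip' {n : ℕ} {L₁ : ℝ} (hL : 0 ≤ L₁) {f : EuclideanSpace ℝ (Fin n) → ℝ}
    (hf : IsPLSmooth 2 L₁ f) (a b : EuclideanSpace ℝ (Fin n)) :
    ‖gradient f a - gradient f b‖ ≤ L₁ * ‖a - b‖ := by
  have h : gradient f a - gradient f b
      = (InnerProductSpace.toDual ℝ _).symm (fderiv ℝ f a - fderiv ℝ f b) := by
    rw [map_sub]; rfl
  rw [h, LinearIsometryEquiv.norm_map]
  refine ContinuousLinearMap.opNorm_le_bound _ (mul_nonneg hL (norm_nonneg _)) fun u => ?_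
  rcases eq_or_ne u 0 with rfl | hu
  · simp
  · have hnu : ‖u‖ ≠ 0 := norm_ne_zero_iff.mpr hu
    have hv1 : ‖(‖u‖⁻¹ • u)‖ = 1 := by
      rw [norm_smul, norm_inv, norm_norm, inv_mul_cancel₀ hnu]
    have key := hf.2 a b _ hv1
    have e1 : ∀ y, iteratedFDeriv ℝ (2-1) f y (fun _ => ‖u‖⁻¹ • u) = fderiv ℝ f y (‖u‖⁻¹ • u) := by
      intro y
      rw [show (2-1 : ℕ) = 1 from rfl, iteratedFDeriv_one_apply]
    rw [e1, e1] at key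
    have e2 : (fderiv ℝ f a - fderiv ℝ f b) u
        = ‖u‖ * (fderiv ℝ f a (‖u‖⁻¹ • u) - fderiv ℝ f b (‖u‖⁻¹ • u)) := by
      simp only [_root_.map_smul, smul_eq_mul, ContinuousLinearMap.sub_apply]
      field_simp
    rw [Real.norm_eq_abs, e2, abs_mul, abs_norm]
    calc ‖u‖ * |fderiv ℝ f a (‖u‖⁻¹ • u) - fderiv ℝ f b (‖u‖⁻¹ • u)|
        ≤ ‖u‖ * (L₁ * ‖a - b‖) := by
          exact mul_le_mul_of_nonneg_left key (norm_nonneg u)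
      _ = L₁ * ‖a - b‖ * ‖u‖ := by ring

theorem integral_norm_ball {n : ℕ} (hn : 1 ≤ n) {δ : ℝ} (hδ : 0 < δ) :
    ∫ u in closedBall (0 : EuclideanSpace ℝ (Fin n)) δ, ‖u‖ =
      (n : ℝ) / (n + 1) * δ ^ (n + 1) *
        (volume (closedBall (0 : EuclideanSpace ℝ (Fin n)) 1)).toReal := by
  have : Nontrivial (EuclideanSpace ℝ (Fin n)) :=
    Module.nontrivial_of_finrank_pos (R := ℝ)
      (by rw [finrank_euclideanSpace_fin]; omega)
  have key := integral_fun_norm_addHaar (volume : Measure (EuclideanSpace ℝ (Fin n)))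
    ((Set.Icc (0:ℝ) δ).indicator id)
  rw [finrank_euclideanSpace_fin] at key
  have h1 : ∀ x : EuclideanSpace ℝ (Fin n),
      (Set.Icc (0:ℝ) δ).indicator id ‖x‖ = (closedBall (0 : EuclideanSpace ℝ (Fin n)) δ).indicator (fun x => ‖x‖) x := by
    intro x
    by_cases h : ‖x‖ ≤ δ
    · rw [Set.indicator_of_mem (Set.mem_Icc.mpr ⟨norm_nonneg x, h⟩), Set.indicator_of_mem (by simpa [dist_eq_norm] using h)]
      rfl
    · rw [Set.indicator_of_notMem (fun hm => h hm.2), Set.indicator_of_notMem (by simpa [dist_eq_norm] using h)]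
  rw [integral_congr_ae (Filter.Eventually.of_forall h1), integral_indicator measurableSet_closedBall] at key
  have h2 : ∀ y : ℝ, y ^ (n-1) • (Set.Icc (0:ℝ) δ).indicator id y
      = (Set.Icc (0:ℝ) δ).indicator (fun y => y ^ (n-1) * y) y := by
    intro y
    by_cases h : y ∈ Set.Icc (0:ℝ) δ <;> simp [h]
  rw [integral_congr_ae (Filter.Eventually.of_forall h2),
    setIntegral_indicator measurableSet_Icc] at key
  have h3 : Set.Ioi (0:ℝ) ∩ Set.Icc 0 δ = Set.Ioc 0 δ := by
    ext y
    simp only [Set.mem_inter_iff, Set.mem_Ioi, Set.mem_Icc, Set.mem_Ioc]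
    constructor
    · rintro ⟨h1, _, h3⟩; exact ⟨h1, h3⟩
    · rintro ⟨h1, h2⟩; exact ⟨h1, h1.le, h2⟩
  rw [h3] at key
  have h4 : ∫ y in Set.Ioc (0:ℝ) δ, y ^ (n-1) * y = δ ^ (n+1) / (n+1) := by
    have : ∀ y ∈ Set.Ioc (0:ℝ) δ, y ^ (n-1) * y = y ^ n := by
      intro y hy
      rw [← pow_succ, Nat.sub_add_cancel hn]
    rw [setIntegral_congr_fun measurableSet_Ioc this, ← intervalIntegral.integral_of_le hδ.le,
      integral_pow]
    simp
  rw [h4] at key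
  rw [key]
  have : volume (ball (0 : EuclideanSpace ℝ (Fin n)) 1) = volume (closedBall (0 : EuclideanSpace ℝ (Fin n)) 1) := (Measure.addHaar_closedBall_eq_addHaar_ball _ _ _).symm
  rw [measureReal_def, this]
  simp only [nsmul_eq_mul, smul_eq_mul]
  ring

end BallAvgAux

/-- If `f` is `(2,L₁)`-smooth, the gradient of `f` averaged over the
ball of radius `δ` is within `L₁nδ/(n+1)` of `∇f(x)`. -/
theorem ball_averaged_gradient_close {n : ℕ} {δ L₁ : ℝ} (hδ : 0 < δ)
    {f : EuclideanSpace ℝ (Fin n) → ℝ} (hf : IsPLSmooth 2 L₁ f)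
    (x : EuclideanSpace ℝ (Fin n)) :
    ‖(δ ^ n * unitBallVol n)⁻¹ •
        (∫ u in Metric.closedBall (0 : EuclideanSpace ℝ (Fin n)) δ, gradient f (x + u))
      - gradient f x‖ ≤ L₁ * n * δ / ((n : ℝ) + 1) := by
  classical
  rcases Nat.eq_zero_or_pos n with hn | hn
  · subst hn
    have h0 : ((δ ^ 0 * unitBallVol 0)⁻¹ •
        (∫ u in Metric.closedBall (0 : EuclideanSpace ℝ (Fin 0)) δ, gradient f (x + u))
        - gradient f x : EuclideanSpace ℝ (Fin 0)) = 0 := Subsingleton.elim _ _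
    rw [h0]
    simp
  · set V := unitBallVol n with hV
    have hVpos : 0 < V := by
      rw [hV, unitBallVol]
      exact ENNReal.toReal_pos (Metric.measure_closedBall_pos volume 0 one_pos).ne'
        measure_closedBall_lt_top.ne
    have hδn : (0:ℝ) < δ ^ n := pow_pos hδ n
    have hcne : (δ ^ n * V) ≠ 0 := by positivity
    have hcnonneg : (0:ℝ) ≤ (δ ^ n * V)⁻¹ := by positivity
    have hL : 0 ≤ L₁ := by
      have hunit : ‖(EuclideanSpace.single (⟨0, hn⟩ : Fin n) (1:ℝ))‖ = 1 := by
        rw [EuclideanSpace.norm_single]; norm_num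
      have hkey := hf.2 (EuclideanSpace.single (⟨0, hn⟩ : Fin n) (1:ℝ)) 0 _ hunit
      rw [sub_zero, hunit, mul_one] at hkey
      exact le_trans (abs_nonneg _) hkey
    have hcontg : Continuous (gradient f) := by
      have hfd : Continuous (fderiv ℝ f) := hf.1.continuous_fderiv (by norm_num)
      exact (LinearIsometryEquiv.continuous _).comp hfd
    have hint : MeasureTheory.IntegrableOn (fun u : EuclideanSpace ℝ (Fin n) => gradient f (x + u))
        (Metric.closedBall (0 : EuclideanSpace ℝ (Fin n)) δ) volume :=
      ((hcontg.comp (continuous_const.add continuous_id)).continuousOn).integrableOn_compact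
        (isCompact_closedBall _ _)
    have hintc : MeasureTheory.IntegrableOn (fun _ : EuclideanSpace ℝ (Fin n) => gradient f x)
        (Metric.closedBall (0 : EuclideanSpace ℝ (Fin n)) δ) volume :=
      (MeasureTheory.integrableOn_const_iff enorm_ne_top).mpr (Or.inr measure_closedBall_lt_top)
    have hvol : (volume (Metric.closedBall (0 : EuclideanSpace ℝ (Fin n)) δ)).toReal = δ ^ n * V := by
      rw [Measure.addHaar_closedBall' volume 0 hδ.le, finrank_euclideanSpace_fin,
        ENNReal.toReal_mul, ENNReal.toReal_ofReal (by positivity)]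
      rfl
    have hsplit : (δ ^ n * unitBallVol n)⁻¹ •
          (∫ u in Metric.closedBall (0 : EuclideanSpace ℝ (Fin n)) δ, gradient f (x + u)) - gradient f x
        = (δ ^ n * V)⁻¹ •
          ∫ u in Metric.closedBall (0 : EuclideanSpace ℝ (Fin n)) δ, (gradient f (x + u) - gradient f x) := by
      rw [MeasureTheory.integral_sub hint hintc, MeasureTheory.setIntegral_const, smul_sub,
        smul_smul, measureReal_def, hvol, inv_mul_cancel₀ hcne, one_smul]
    rw [hsplit, norm_smul, Real.norm_eq_abs, abs_of_nonneg hcnonneg]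
    have hbound : ‖∫ u in Metric.closedBall (0 : EuclideanSpace ℝ (Fin n)) δ, (gradient f (x + u) - gradient f x)‖
        ≤ ∫ u in Metric.closedBall (0 : EuclideanSpace ℝ (Fin n)) δ, L₁ * ‖u‖ := by
      refine (MeasureTheory.norm_integral_le_integral_norm _).trans ?_
      refine MeasureTheory.setIntegral_mono_on ((hint.sub hintc).norm) ?_
        measurableSet_closedBall ?_
      · exact ((continuous_const.mul continuous_norm).continuousOn).integrableOn_compact
          (isCompact_closedBall _ _)
      · intro u _
        have := BallAvgAux.grad_lip' hL hf (x + u) x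
        simpa [add_sub_cancel_left] using this
    have hIval : ∫ u in Metric.closedBall (0 : EuclideanSpace ℝ (Fin n)) δ, L₁ * ‖u‖
        = L₁ * ((n : ℝ) / (n + 1) * δ ^ (n + 1) * V) := by
      rw [MeasureTheory.integral_const_mul, BallAvgAux.integral_norm_ball hn hδ]
      rfl
    calc (δ ^ n * V)⁻¹ * ‖∫ u in Metric.closedBall (0 : EuclideanSpace ℝ (Fin n)) δ, (gradient f (x + u) - gradient f x)‖
        ≤ (δ ^ n * V)⁻¹ * (L₁ * ((n : ℝ) / (n + 1) * δ ^ (n + 1) * V)) := by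
          rw [← hIval]
          exact mul_le_mul_of_nonneg_left hbound hcnonneg
      _ = L₁ * n * δ / ((n : ℝ) + 1) := by
          have hn1 : ((n : ℝ) + 1) ≠ 0 := by positivity
          rw [pow_succ]
          field_simp
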